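/- arXiv:2410.05848 — 3 statements merged into one kernel-verified Lean document; each statement's English description precedes it below -/
import Mathlib

section
/- Let P and Q be orthogonal projections on a complex Hilbert space H with operator norm ‖P - Q‖ < 1. Then the map T : range Q → range P given by T x = P x is a linear bijection from range Q onto range P, and satisfies ‖T x‖² ≥ (1 − ‖P - Q‖)·‖x‖² for all x ∈ range Q. -/
open scoped InnerProductSpace

section aux

variable {H : Type*} [NormedAddCommGroup H] [InnerProductSpace ℂ H] [CompleteSpace H]

lemma fixed_of_mem_range {Q : H →L[ℂ] H} (hQ : Q ∘L Q = Q) {x : H}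
    (hx : x ∈ LinearMap.range (Q : H →ₗ[ℂ] H)) : Q x = x := by
  obtain ⟨y, rfl⟩ := hx
  have := congrArg (fun f : H →L[ℂ] H => f y) hQ
  simpa using this

lemma inner_proj_self {P : H →L[ℂ] H} (hP : P ∘L P = P) (hPsa : IsSelfAdjoint P) (x : H) :
    ⟪P x, x⟫_ℂ = (‖P x‖ : ℂ) ^ 2 := by
  have h1 : P (P x) = P x := by
    have := congrArg (fun f : H →L[ℂ] H => f x) hP
    simpa using this
  calc ⟪P x, x⟫_ℂ = ⟪P (P x), x⟫_ℂ := by rw [h1]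
    _ = ⟪P x, P x⟫_ℂ := hPsa.isSymmetric (P x) x
    _ = (‖P x‖ : ℂ) ^ 2 := by
        rw [inner_self_eq_norm_sq_to_K]; norm_num

lemma key_ineq {P Q : H →L[ℂ] H} (hP : P ∘L P = P) (hPsa : IsSelfAdjoint P)
    (hPQ : ‖P - Q‖ < 1) {x : H} (hx : Q x = x) :
    (1 - ‖P - Q‖) * ‖x‖ ^ 2 ≤ ‖P x‖ ^ 2 := by
  have h0 : (P - Q) x = P x - x := by simp [hx]
  have h2 : ‖P x - x‖ ^ 2 = ‖x‖ ^ 2 - ‖P x‖ ^ 2 := by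
    have hre : RCLike.re ⟪P x, x⟫_ℂ = ‖P x‖ ^ 2 := by
      rw [inner_proj_self hP hPsa x, ← Complex.ofReal_pow]
      exact Complex.ofReal_re _
    have := @norm_sub_sq ℂ _ _ _ _ (P x) x
    rw [hre] at this
    linarith
  have h3 : ‖(P - Q) x‖ ≤ ‖P - Q‖ * ‖x‖ := (P - Q).le_opNorm x
  rw [h0] at h3
  have h4 : ‖P x - x‖ ^ 2 ≤ (‖P - Q‖ * ‖x‖) ^ 2 := by
    have := norm_nonneg (P x - x)
    nlinarith
  have hc : (0:ℝ) ≤ ‖P - Q‖ := norm_nonneg _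
  nlinarith [norm_nonneg x, sq_nonneg (‖x‖ * ‖P - Q‖)]

end aux

theorem restricted_projection_bijective_of_norm_sub_lt_one
    {H : Type*} [NormedAddCommGroup H] [InnerProductSpace ℂ H] [CompleteSpace H]
    (P Q : H →L[ℂ] H)
    (hP : P ∘L P = P) (hPsa : IsSelfAdjoint P)
    (hQ : Q ∘L Q = Q) (hQsa : IsSelfAdjoint Q)
    (hPQ : ‖P - Q‖ < 1) :
    Function.Bijective (fun x : LinearMap.range (Q : H →ₗ[ℂ] H) =>
      (⟨P (x : H), LinearMap.mem_range.mpr ⟨(x : H), rfl⟩⟩ : LinearMap.range (P : H →ₗ[ℂ] H))) ∧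
    ∀ x : H, x ∈ LinearMap.range (Q : H →ₗ[ℂ] H) → (1 - ‖P - Q‖) * ‖x‖ ^ 2 ≤ ‖P x‖ ^ 2 := by
  set c : ℝ := ‖P - Q‖ with hc
  have hc0 : 0 ≤ c := norm_nonneg _
  have hc1 : 0 < 1 - c := by linarith
  have hQP : ‖Q - P‖ < 1 := by rw [norm_sub_rev]; exact hPQ
  -- the inequality
  have hineq : ∀ x : H, x ∈ LinearMap.range (Q : H →ₗ[ℂ] H) → (1 - c) * ‖x‖ ^ 2 ≤ ‖P x‖ ^ 2 :=
    fun x hx => key_ineq hP hPsa hPQ (fixed_of_mem_range hQ hx)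
  -- P x = 0 → x = 0 for x ∈ range Q
  have hinj0 : ∀ x : H, x ∈ LinearMap.range (Q : H →ₗ[ℂ] H) → P x = 0 → x = 0 := by
    intro x hx hPx
    have := hineq x hx
    rw [hPx] at this
    simp only [norm_zero] at this
    have : ‖x‖ ^ 2 ≤ 0 := by nlinarith
    have := sq_nonneg ‖x‖
    have hx0 : ‖x‖ ^ 2 = 0 := le_antisymm ‹_› ‹_›
    simpa using pow_eq_zero_iff (n := 2) (by norm_num) |>.mp hx0
  -- range Q is closed
  have hQclosed : IsClosed ((LinearMap.range (Q : H →ₗ[ℂ] H) : Submodule ℂ H) : Set H) := by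
    have : ((LinearMap.range (Q : H →ₗ[ℂ] H) : Submodule ℂ H) : Set H) = {x | Q x = x} := by
      ext x
      exact ⟨fun h => fixed_of_mem_range hQ h, fun h => ⟨x, h⟩⟩
    rw [this]
    exact isClosed_eq Q.continuous continuous_id
  haveI : CompleteSpace (LinearMap.range (Q : H →ₗ[ℂ] H)) := hQclosed.completeSpace_coe
  -- the restricted map, as a CLM, is antilipschitz
  set e : (LinearMap.range (Q : H →ₗ[ℂ] H)) →L[ℂ] H := P.comp (LinearMap.range (Q : H →ₗ[ℂ] H)).subtypeL with he
  have hK : ∀ x : LinearMap.range (Q : H →ₗ[ℂ] H), ‖x‖ ≤ (Real.sqrt (1 - c))⁻¹.toNNReal * ‖e x‖ := by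
    intro x
    have h1 := hineq (x : H) x.2
    have h2 : Real.sqrt (1 - c) * ‖(x : H)‖ ≤ ‖P (x : H)‖ := by
      have hs : (Real.sqrt (1 - c) * ‖(x : H)‖) ^ 2 ≤ ‖P (x : H)‖ ^ 2 := by
        rw [mul_pow, Real.sq_sqrt hc1.le]
        exact h1
      have h := Real.sqrt_le_sqrt hs
      rwa [Real.sqrt_sq (by positivity), Real.sqrt_sq (norm_nonneg _)] at h
    have hs0 : 0 < Real.sqrt (1 - c) := Real.sqrt_pos.mpr hc1
    have : ‖(x : H)‖ ≤ (Real.sqrt (1 - c))⁻¹ * ‖P (x : H)‖ := by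
      rw [inv_mul_eq_div, le_div_iff₀ hs0]
      linarith [h2]
    calc ‖x‖ = ‖(x : H)‖ := rfl
      _ ≤ (Real.sqrt (1 - c))⁻¹ * ‖P (x : H)‖ := this
      _ = (Real.sqrt (1 - c))⁻¹.toNNReal * ‖e x‖ := by
          rw [Real.coe_toNNReal _ (by positivity)]
          rfl
  have hanti : AntilipschitzWith _ e := e.antilipschitz_of_bound hK
  have hclosed_range : IsClosed (Set.range e) := hanti.isClosed_range e.uniformContinuous
  -- the image submodule
  set W : Submodule ℂ H := (LinearMap.range (Q : H →ₗ[ℂ] H)).map (P : H →ₗ[ℂ] H) with hW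
  have hWrange : (W : Set H) = Set.range e := by
    ext y
    constructor
    · rintro ⟨x, hx, rfl⟩
      exact ⟨⟨x, hx⟩, rfl⟩
    · rintro ⟨⟨x, hx⟩, rfl⟩
      exact ⟨x, hx, rfl⟩
  have hWclosed : IsClosed (W : Set H) := hWrange ▸ hclosed_range
  haveI : CompleteSpace W := hWclosed.completeSpace_coe
  -- every element of range P lies in W
  have hsurj0 : ∀ y : H, y ∈ LinearMap.range (P : H →ₗ[ℂ] H) → y ∈ W := by
    intro y hy
    have hPy : P y = y := fixed_of_mem_range hP hy
    obtain ⟨a, ha, b, hb, hyab⟩ := W.exists_add_mem_mem_orthogonal y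
    -- P a = a
    have hPa : P a = a := by
      obtain ⟨x, hx, rfl⟩ := ha
      have := congrArg (fun f : H →L[ℂ] H => f x) hP
      simpa using this
    have hPb : P b = b := by
      have h := congrArg P hyab
      rw [hPy, map_add, hPa] at h
      rw [hyab] at h
      exact (add_left_cancel h).symm
    -- Q b = 0
    have hQb : Q b = 0 := by
      have hmem : P (Q b) ∈ W := ⟨Q b, ⟨b, rfl⟩, rfl⟩
      have h0 : ⟪P (Q b), b⟫_ℂ = 0 := (Submodule.mem_orthogonal W b).mp hb _ hmem
      have hs : ⟪P (Q b), b⟫_ℂ = ⟪Q b, P b⟫_ℂ := hPsa.isSymmetric (Q b) b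
      rw [hPb] at hs
      rw [hs] at h0
      have hq2 : Q (Q b) = Q b := by
        have := congrArg (fun f : H →L[ℂ] H => f b) hQ
        simpa using this
      have hs2 : ⟪Q (Q b), b⟫_ℂ = ⟪Q b, Q b⟫_ℂ := hQsa.isSymmetric (Q b) b
      rw [hq2] at hs2
      have h2 : ⟪Q b, Q b⟫_ℂ = 0 := hs2.symm.trans h0
      exact inner_self_eq_zero.mp h2
    -- b = 0 via inequality with roles swapped
    have hkey := key_ineq hQ hQsa hQP hPb
    rw [hQb] at hkey
    simp only [norm_zero] at hkey
    have hQPc : ‖Q - P‖ = c := by rw [norm_sub_rev]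
    rw [hQPc] at hkey
    have hb2 : ‖b‖ ^ 2 ≤ 0 := by nlinarith
    have hb0 : b = 0 := by
      have := sq_nonneg ‖b‖
      have hx0 : ‖b‖ ^ 2 = 0 := le_antisymm hb2 this
      simpa using pow_eq_zero_iff (n := 2) (by norm_num) |>.mp hx0
    rw [hyab, hb0, add_zero]
    exact ha
  constructor
  · constructor
    · -- injective
      intro x y hxy
      have h1 : P (x : H) = P (y : H) := congrArg Subtype.val hxy
      have h2 : P ((x : H) - (y : H)) = 0 := by rw [map_sub, h1, sub_self]
      have h3 : (x : H) - (y : H) ∈ LinearMap.range (Q : H →ₗ[ℂ] H) :=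
        Submodule.sub_mem _ x.2 y.2
      have := hinj0 _ h3 h2
      exact Subtype.ext (sub_eq_zero.mp this)
    · -- surjective
      rintro ⟨y, hy⟩
      obtain ⟨x, hx, hxy⟩ := hsurj0 y hy
      exact ⟨⟨x, hx⟩, Subtype.ext hxy⟩
  · exact hineq
end

section
/- Let P and Q be orthogonal projections on a complex Hilbert space H and set P⊥ = I − P and Q⊥ = I − Q, which are again orthogonal projections. Then ker(P⊥ − Q⊥ + I) = (range P) ∩ (ker Q) and ker(P⊥ − Q⊥ − I) = (ker P) ∩ (range Q). Consequently, whenever these subspaces are finite-dimensional, dim ker(P⊥ − Q⊥ + I) − dim ker(P⊥ − Q⊥ − I) = −(dim ker(P − Q + I) − dim ker(P − Q − I)). -/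
open ContinuousLinearMap in
lemma ker_sub_sub_one_eq {H : Type*} [NormedAddCommGroup H] [InnerProductSpace ℂ H]
    [CompleteSpace H] (P Q : H →L[ℂ] H)
    (hP : P ∘L P = P) (hPsa : IsSelfAdjoint P)
    (hQ : Q ∘L Q = Q) (hQsa : IsSelfAdjoint Q) :
    LinearMap.ker ((P - Q - 1 : H →L[ℂ] H) : H →ₗ[ℂ] H) =
      LinearMap.range (P : H →ₗ[ℂ] H) ⊓ LinearMap.ker (Q : H →ₗ[ℂ] H) := by
  have hPadj : ContinuousLinearMap.adjoint P = P := isSelfAdjoint_iff'.mp hPsa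
  have hQadj : ContinuousLinearMap.adjoint Q = Q := isSelfAdjoint_iff'.mp hQsa
  have hPP : ∀ x, P (P x) = P x := fun x => congrFun (congrArg DFunLike.coe hP) x
  have hQQ : ∀ x, Q (Q x) = Q x := fun x => congrFun (congrArg DFunLike.coe hQ) x
  have innPr : ∀ x : H, (inner ℂ x (P x) : ℂ) = inner ℂ (P x) (P x) := by
    intro x
    have h := ContinuousLinearMap.adjoint_inner_left P (P x) x
    rw [hPadj, hPP] at h
    exact h.symm
  have innPl : ∀ x : H, (inner ℂ (P x) x : ℂ) = inner ℂ (P x) (P x) := by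
    intro x
    have h := ContinuousLinearMap.adjoint_inner_right P (P x) x
    rw [hPadj, hPP] at h
    exact h.symm
  have innQl : ∀ x : H, (inner ℂ (Q x) x : ℂ) = inner ℂ (Q x) (Q x) := by
    intro x
    have h := ContinuousLinearMap.adjoint_inner_right Q (Q x) x
    rw [hQadj, hQQ] at h
    exact h.symm
  ext x
  simp only [LinearMap.mem_ker, Submodule.mem_inf, LinearMap.mem_range,
    ContinuousLinearMap.coe_coe, ContinuousLinearMap.sub_apply, ContinuousLinearMap.one_apply]
  constructor
  · intro h
    have hx : P x - Q x = x := by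
      have h' : P x - Q x - x = 0 := h
      linear_combination (norm := abel) h'
    have e1 : (inner ℂ x x : ℂ) = inner ℂ (P x) (P x) - inner ℂ (Q x) (Q x) := by
      have h2 : (inner ℂ x x : ℂ) = inner ℂ (P x - Q x) x := by rw [hx]
      rw [inner_sub_left, innPl, innQl] at h2
      exact h2
    have e2 : (inner ℂ (x - P x) (x - P x) : ℂ) = inner ℂ x x - inner ℂ (P x) (P x) := by
      rw [inner_sub_left, inner_sub_right, inner_sub_right, innPl, innPr]
      ring
    have hsumC : (inner ℂ (Q x) (Q x) : ℂ) + inner ℂ (x - P x) (x - P x) = 0 := by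
      linear_combination e1 + e2
    rw [inner_self_eq_norm_sq_to_K, inner_self_eq_norm_sq_to_K] at hsumC
    have hsumR : ‖Q x‖^2 + ‖x - P x‖^2 = (0 : ℝ) :=
      RCLike.ofReal_eq_zero.mp (by exact_mod_cast hsumC)
    have hq0 : ‖Q x‖ = 0 := by
      nlinarith [sq_nonneg ‖Q x‖, sq_nonneg ‖x - P x‖, norm_nonneg (Q x), norm_nonneg (x - P x)]
    have hp0 : ‖x - P x‖ = 0 := by
      nlinarith [sq_nonneg ‖Q x‖, sq_nonneg ‖x - P x‖, norm_nonneg (Q x), norm_nonneg (x - P x)]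
    have hQ0 : Q x = 0 := norm_eq_zero.mp hq0
    have hPx : P x = x := (sub_eq_zero.mp (norm_eq_zero.mp hp0)).symm
    exact ⟨⟨x, hPx⟩, hQ0⟩
  · rintro ⟨⟨y, hy⟩, hq⟩
    have hPx : P x = x := by rw [← hy, hPP, hy]
    rw [hPx, hq]
    abel

theorem duality_for_relative_index
    {H : Type*} [NormedAddCommGroup H] [InnerProductSpace ℂ H] [CompleteSpace H]
    (P Q : H →L[ℂ] H)
    (hP : P ∘L P = P) (hPsa : IsSelfAdjoint P)
    (hQ : Q ∘L Q = Q) (hQsa : IsSelfAdjoint Q) :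
    ((1 - P) ∘L (1 - P) = 1 - P ∧ IsSelfAdjoint (1 - P : H →L[ℂ] H)) ∧
    ((1 - Q) ∘L (1 - Q) = 1 - Q ∧ IsSelfAdjoint (1 - Q : H →L[ℂ] H)) ∧
    LinearMap.ker (((1 - P) - (1 - Q) + 1 : H →L[ℂ] H) : H →ₗ[ℂ] H) =
      LinearMap.range (P : H →ₗ[ℂ] H) ⊓ LinearMap.ker (Q : H →ₗ[ℂ] H) ∧
    LinearMap.ker (((1 - P) - (1 - Q) - 1 : H →L[ℂ] H) : H →ₗ[ℂ] H) =
      LinearMap.ker (P : H →ₗ[ℂ] H) ⊓ LinearMap.range (Q : H →ₗ[ℂ] H) ∧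
    (FiniteDimensional ℂ (LinearMap.ker (((1 - P) - (1 - Q) + 1 : H →L[ℂ] H) : H →ₗ[ℂ] H)) →
     FiniteDimensional ℂ (LinearMap.ker (((1 - P) - (1 - Q) - 1 : H →L[ℂ] H) : H →ₗ[ℂ] H)) →
     FiniteDimensional ℂ (LinearMap.ker ((P - Q + 1 : H →L[ℂ] H) : H →ₗ[ℂ] H)) →
     FiniteDimensional ℂ (LinearMap.ker ((P - Q - 1 : H →L[ℂ] H) : H →ₗ[ℂ] H)) →
      (Module.finrank ℂ (LinearMap.ker (((1 - P) - (1 - Q) + 1 : H →L[ℂ] H) : H →ₗ[ℂ] H)) : ℤ) -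
          (Module.finrank ℂ (LinearMap.ker (((1 - P) - (1 - Q) - 1 : H →L[ℂ] H) : H →ₗ[ℂ] H)) : ℤ) =
        -((Module.finrank ℂ (LinearMap.ker ((P - Q + 1 : H →L[ℂ] H) : H →ₗ[ℂ] H)) : ℤ) -
          (Module.finrank ℂ (LinearMap.ker ((P - Q - 1 : H →L[ℂ] H) : H →ₗ[ℂ] H)) : ℤ))) := by
  have hPP : ∀ x, P (P x) = P x := fun x => congrFun (congrArg DFunLike.coe hP) x
  have hQQ : ∀ x, Q (Q x) = Q x := fun x => congrFun (congrArg DFunLike.coe hQ) x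
  have kerneg : ∀ T : H →L[ℂ] H, LinearMap.ker ((-T : H →L[ℂ] H) : H →ₗ[ℂ] H) = LinearMap.ker (T : H →ₗ[ℂ] H) := by
    intro T; ext x
    simp [LinearMap.mem_ker]
  have hop1 : ((1 - P) - (1 - Q) + 1 : H →L[ℂ] H) = -(P - Q - 1) := by abel
  have hop2 : ((1 - P) - (1 - Q) - 1 : H →L[ℂ] H) = -(P - Q + 1) := by abel
  have hop3 : (P - Q + 1 : H →L[ℂ] H) = -(Q - P - 1) := by abel
  have hk1 : LinearMap.ker (((1 - P) - (1 - Q) + 1 : H →L[ℂ] H) : H →ₗ[ℂ] H)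
      = LinearMap.ker ((P - Q - 1 : H →L[ℂ] H) : H →ₗ[ℂ] H) := by rw [hop1, kerneg]
  have hk2 : LinearMap.ker (((1 - P) - (1 - Q) - 1 : H →L[ℂ] H) : H →ₗ[ℂ] H)
      = LinearMap.ker ((P - Q + 1 : H →L[ℂ] H) : H →ₗ[ℂ] H) := by rw [hop2, kerneg]
  have keyPQ := ker_sub_sub_one_eq P Q hP hPsa hQ hQsa
  have keyQP := ker_sub_sub_one_eq Q P hQ hQsa hP hPsa
  have hk3 : LinearMap.ker ((P - Q + 1 : H →L[ℂ] H) : H →ₗ[ℂ] H)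
      = LinearMap.ker (P : H →ₗ[ℂ] H) ⊓ LinearMap.range (Q : H →ₗ[ℂ] H) := by
    rw [hop3, kerneg, keyQP, inf_comm]
  refine ⟨⟨?_, ?_⟩, ⟨?_, ?_⟩, ?_, ?_, ?_⟩
  · ext x
    simp [ContinuousLinearMap.comp_apply, map_sub, hPP x]
  · rw [IsSelfAdjoint, star_sub, star_one, hPsa.star_eq]
  · ext x
    simp [ContinuousLinearMap.comp_apply, map_sub, hQQ x]
  · rw [IsSelfAdjoint, star_sub, star_one, hQsa.star_eq]
  · rw [hk1, keyPQ]
  · rw [hk2, hk3]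
  · intro _ _ _ _
    rw [hk1, hk2]
    ring
end

section
/- Let P and Q be orthogonal projections on a complex Hilbert space H and suppose there exists a compact operator K on H such that the operator norm ‖P − Q − K‖ < 1. Then (ker P) ∩ (range Q) and (range P) ∩ (ker Q) are finite-dimensional subspaces of H. -/
/-- If a compact operator is bounded below on a closed submodule, that submodule is
finite-dimensional. -/
lemma finiteDimensional_of_compact_bddBelow
    {H : Type*} [NormedAddCommGroup H] [InnerProductSpace ℂ H] [CompleteSpace H]
    (K : H →L[ℂ] H) (hK : IsCompactOperator K) (V : Submodule ℂ H)
    (hVc : IsClosed (V : Set H)) {δ : ℝ} (hδ : 0 < δ)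
    (hb : ∀ x ∈ V, δ * ‖x‖ ≤ ‖K x‖) : FiniteDimensional ℂ V := by
  haveI : CompleteSpace V := hVc.completeSpace_coe
  set f : V → H := fun x => K x with hf
  have hf_anti : AntilipschitzWith (δ⁻¹).toNNReal f := by
    refine AntilipschitzWith.of_le_mul_dist fun x y => ?_
    have hxy : δ * ‖(x : H) - (y : H)‖ ≤ ‖K ((x : H) - (y : H))‖ :=
      hb _ (V.sub_mem x.2 y.2)
    rw [map_sub] at hxy
    have : ‖(x : H) - (y : H)‖ ≤ δ⁻¹ * ‖K (x : H) - K (y : H)‖ := by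
      rw [inv_mul_eq_div, le_div_iff₀ hδ, mul_comm]
      exact hxy
    simpa [dist_eq_norm, f, Real.coe_toNNReal _ (le_of_lt (inv_pos.mpr hδ)),
      Subtype.dist_eq, dist_eq_norm] using this
  have hf_cont : UniformContinuous f :=
    K.uniformContinuous.comp uniformContinuous_subtype_val
  have hC : IsCompact (closure <| K '' Metric.closedBall 0 1) :=
    hK.isCompact_closure_image_closedBall 1
  have htb : TotallyBounded (f ⁻¹' closure (K '' Metric.closedBall 0 1)) :=
    totallyBounded_preimage (hf_anti.isUniformInducing hf_cont) hC.totallyBounded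
  have hBtb : TotallyBounded (Metric.closedBall (0 : V) 1) := by
    refine htb.subset fun x hx => ?_
    simp only [Set.mem_preimage]
    refine subset_closure ⟨(x : H), ?_, rfl⟩
    rw [Metric.mem_closedBall, dist_zero_right]
    have hx' := Metric.mem_closedBall.mp hx
    rw [dist_zero_right] at hx'
    exact hx'
  have hBc : IsCompact (Metric.closedBall (0 : V) 1) :=
    isCompact_iff_totallyBounded_isComplete.mpr
      ⟨hBtb, Metric.isClosed_closedBall.isComplete⟩
  exact FiniteDimensional.of_isCompact_closedBall₀ ℂ one_pos hBc

theorem fredholm_pair_of_compact_perturbation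
    {H : Type*} [NormedAddCommGroup H] [InnerProductSpace ℂ H] [CompleteSpace H]
    (P Q K : H →L[ℂ] H)
    (hP : P ∘L P = P) (hPsa : IsSelfAdjoint P)
    (hQ : Q ∘L Q = Q) (hQsa : IsSelfAdjoint Q)
    (hK : IsCompactOperator K)
    (hnorm : ‖P - Q - K‖ < 1) :
    FiniteDimensional ℂ (LinearMap.ker (P : H →ₗ[ℂ] H) ⊓ LinearMap.range (Q : H →ₗ[ℂ] H) : Submodule ℂ H) ∧
    FiniteDimensional ℂ (LinearMap.range (P : H →ₗ[ℂ] H) ⊓ LinearMap.ker (Q : H →ₗ[ℂ] H) : Submodule ℂ H) := by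
  set δ : ℝ := 1 - ‖P - Q - K‖ with hδdef
  have hδ : 0 < δ := by linarith
  -- fixed points of projections
  have hQfix : ∀ x ∈ LinearMap.range (Q : H →ₗ[ℂ] H), Q x = x := by
    rintro x ⟨y, rfl⟩
    have := congrFun (congrArg (fun T : H →L[ℂ] H => (T : H → H)) hQ) y
    simpa using this
  have hPfix : ∀ x ∈ LinearMap.range (P : H →ₗ[ℂ] H), P x = x := by
    rintro x ⟨y, rfl⟩
    have := congrFun (congrArg (fun T : H →L[ℂ] H => (T : H → H)) hP) y
    simpa using this
  -- ranges are closed (as kernels of 1 - proj)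
  have hrangeQ : (LinearMap.range (Q : H →ₗ[ℂ] H) : Set H) = (LinearMap.ker ((1 - Q : H →L[ℂ] H) : H →ₗ[ℂ] H) : Set H) := by
    ext x
    simp only [SetLike.mem_coe, LinearMap.mem_range, LinearMap.mem_ker, ContinuousLinearMap.coe_coe,
      ContinuousLinearMap.coe_sub', Pi.sub_apply, ContinuousLinearMap.one_apply, sub_eq_zero]
    constructor
    · rintro ⟨y, rfl⟩
      exact (hQfix _ ⟨y, rfl⟩).symm
    · intro h; exact ⟨x, h.symm⟩
  have hrangeP : (LinearMap.range (P : H →ₗ[ℂ] H) : Set H) = (LinearMap.ker ((1 - P : H →L[ℂ] H) : H →ₗ[ℂ] H) : Set H) := by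
    ext x
    simp only [SetLike.mem_coe, LinearMap.mem_range, LinearMap.mem_ker, ContinuousLinearMap.coe_coe,
      ContinuousLinearMap.coe_sub', Pi.sub_apply, ContinuousLinearMap.one_apply, sub_eq_zero]
    constructor
    · rintro ⟨y, rfl⟩
      exact (hPfix _ ⟨y, rfl⟩).symm
    · intro h; exact ⟨x, h.symm⟩
  have hclosed1 : IsClosed ((LinearMap.ker (P : H →ₗ[ℂ] H) ⊓ LinearMap.range (Q : H →ₗ[ℂ] H) : Submodule ℂ H) : Set H) := by
    have : ((LinearMap.ker (P : H →ₗ[ℂ] H) ⊓ LinearMap.range (Q : H →ₗ[ℂ] H) : Submodule ℂ H) : Set H)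
        = (LinearMap.ker (P : H →ₗ[ℂ] H) : Set H) ∩ (LinearMap.ker ((1 - Q : H →L[ℂ] H) : H →ₗ[ℂ] H) : Set H) := by
      rw [Submodule.coe_inf, hrangeQ]
    rw [this]
    exact (ContinuousLinearMap.isClosed_ker P).inter (ContinuousLinearMap.isClosed_ker (1 - Q))
  have hclosed2 : IsClosed ((LinearMap.range (P : H →ₗ[ℂ] H) ⊓ LinearMap.ker (Q : H →ₗ[ℂ] H) : Submodule ℂ H) : Set H) := by
    have : ((LinearMap.range (P : H →ₗ[ℂ] H) ⊓ LinearMap.ker (Q : H →ₗ[ℂ] H) : Submodule ℂ H) : Set H)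
        = (LinearMap.ker ((1 - P : H →L[ℂ] H) : H →ₗ[ℂ] H) : Set H) ∩ (LinearMap.ker (Q : H →ₗ[ℂ] H) : Set H) := by
      rw [Submodule.coe_inf, hrangeP]
    rw [this]
    exact (ContinuousLinearMap.isClosed_ker (1 - P)).inter (ContinuousLinearMap.isClosed_ker Q)
  -- lower bounds for K on the two subspaces
  have key : ∀ x : H, ‖(P - Q - K) x‖ ≤ ‖P - Q - K‖ * ‖x‖ := fun x =>
    (P - Q - K).le_opNorm x
  have hb1 : ∀ x ∈ (LinearMap.ker (P : H →ₗ[ℂ] H) ⊓ LinearMap.range (Q : H →ₗ[ℂ] H) : Submodule ℂ H),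
      δ * ‖x‖ ≤ ‖K x‖ := by
    rintro x ⟨hx1, hx2⟩
    have hPx : P x = 0 := hx1
    have hQx : Q x = x := hQfix x hx2
    have h1 : (P - Q - K) x = -x - K x := by
      simp [ContinuousLinearMap.sub_apply, hPx, hQx]
    have h2 : ‖-x - K x‖ ≤ ‖P - Q - K‖ * ‖x‖ := h1 ▸ key x
    have h3 : ‖x‖ - ‖K x‖ ≤ ‖-x - K x‖ := by
      calc ‖x‖ - ‖K x‖ = ‖-x‖ - ‖K x‖ := by rw [norm_neg]
        _ ≤ ‖-x - K x‖ := norm_sub_norm_le _ _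
    rw [hδdef]; nlinarith [norm_nonneg x]
  have hb2 : ∀ x ∈ (LinearMap.range (P : H →ₗ[ℂ] H) ⊓ LinearMap.ker (Q : H →ₗ[ℂ] H) : Submodule ℂ H),
      δ * ‖x‖ ≤ ‖K x‖ := by
    rintro x ⟨hx1, hx2⟩
    have hPx : P x = x := hPfix x hx1
    have hQx : Q x = 0 := hx2
    have h1 : (P - Q - K) x = x - K x := by
      simp [ContinuousLinearMap.sub_apply, hPx, hQx]
    have h2 : ‖x - K x‖ ≤ ‖P - Q - K‖ * ‖x‖ := h1 ▸ key x
    have h3 : ‖x‖ - ‖K x‖ ≤ ‖x - K x‖ := norm_sub_norm_le _ _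
    rw [hδdef]; nlinarith [norm_nonneg x]
  exact ⟨finiteDimensional_of_compact_bddBelow K hK _ hclosed1 hδ hb1,
    finiteDimensional_of_compact_bddBelow K hK _ hclosed2 hδ hb2⟩
end
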